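/- Let R : ℝ → ℝ be differentiable, let t : ℝ² → ℝ be continuous and differentiable with ∂t/∂y(x, y) ≠ 0 for all (x, y), and let T : ℝ × ℝ → ℝ be a contour family for t: for every level t_0 the function x ↦ T(t_0, x) is differentiable and monotone and satisfies t(x, T(t_0, x)) = t_0 for all x ∈ ℝ, and moreover T(t(x, y), x) = y for all (x, y) ∈ ℝ². Define g(x) = t(x, R(x)) and D(x) = R'(x) − T'(t(x, R(x)), x), where T'(t_0, ·) denotes the derivative of x ↦ T(t_0, x). Then g is monotone on ℝ (nondecreasing or nonincreasing) if and only if D keeps a single sign (zero allowed) on ℝ, i.e. either D(x) ≥ 0 for all x or D(x) ≤ 0 for all x. -/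

import Mathlib

/-- A monotone function has nonnegative derivative wherever it is differentiable. -/
lemma mono_deriv_nonneg' {g : ℝ → ℝ} (hm : Monotone g) {c x : ℝ}
    (h : HasDerivAt g c x) : 0 ≤ c := by
  have h' := hasDerivAt_iff_tendsto_slope.mp h
  refine ge_of_tendsto h' ?_
  filter_upwards [self_mem_nhdsWithin] with y hy
  rcases lt_or_gt_of_ne (show y ≠ x from hy) with h1 | h1
  · have hg : g y ≤ g x := hm h1.le
    rw [slope_def_field]
    exact div_nonneg_iff.mpr (Or.inr ⟨by linarith, by linarith⟩)
  · have hg : g x ≤ g y := hm h1.le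
    rw [slope_def_field]
    exact div_nonneg (by linarith) (by linarith)

lemma anti_deriv_nonpos' {g : ℝ → ℝ} (hm : Antitone g) {c x : ℝ}
    (h : HasDerivAt g c x) : c ≤ 0 := by
  have := mono_deriv_nonneg' (g := fun x => -g x) (fun a b hab => neg_le_neg (hm hab)) h.neg
  linarith

/-- The paper's Theorem 3: the link function `t` is monotone along the model curve
`r₂ = R r₁` if and only if `R' − T'` keeps the same sign at all contact points with
contours of `t`. -/
theorem monotone_along_curve_iff_sign
    (R : ℝ → ℝ) (hR : Differentiable ℝ R)
    (t : ℝ → ℝ → ℝ)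
    (htc : Continuous fun p : ℝ × ℝ => t p.1 p.2)
    (htd : Differentiable ℝ fun p : ℝ × ℝ => t p.1 p.2)
    (hty : ∀ x y : ℝ, deriv (fun y' => t x y') y ≠ 0)
    (T : ℝ → ℝ → ℝ)
    (hTd : ∀ t₀ : ℝ, Differentiable ℝ (T t₀))
    (hTm : ∀ t₀ : ℝ, Monotone (T t₀) ∨ Antitone (T t₀))
    (hTlevel : ∀ t₀ x : ℝ, t x (T t₀ x) = t₀)
    (hTinv : ∀ x y : ℝ, T (t x y) x = y) :
    (Monotone (fun x => t x (R x)) ∨ Antitone (fun x => t x (R x))) ↔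
      ((∀ x : ℝ, 0 ≤ deriv R x - deriv (T (t x (R x))) x) ∨
        (∀ x : ℝ, deriv R x - deriv (T (t x (R x))) x ≤ 0)) := by
  -- notation
  set f : ℝ × ℝ → ℝ := fun p => t p.1 p.2 with hf
  -- each section `t x` is differentiable
  have hsec : ∀ x : ℝ, Differentiable ℝ (t x) := by
    intro x
    have h1 : Differentiable ℝ (fun y : ℝ => f (x, y)) :=
      htd.comp ((differentiable_const x).prodMk differentiable_id)
    exact h1
  -- each section `t x` is injective
  have hinj : ∀ x : ℝ, Function.Injective (t x) := by
    intro x y₁ y₂ h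
    have h1 := hTinv x y₁
    rw [h, hTinv] at h1
    exact h1.symm
  -- each section is strictly monotone or strictly antitone
  have hsm : ∀ x : ℝ, StrictMono (t x) ∨ StrictAnti (t x) := fun x =>
    Continuous.strictMono_of_inj (hsec x).continuous (hinj x)
  -- the derivative of any section at any point, as a `HasDerivAt`
  have hsecd : ∀ x y : ℝ, HasDerivAt (t x) (fderiv ℝ f (x, y) (0, 1)) y := by
    intro x y
    have hy : HasDerivAt (fun y' : ℝ => ((x, y') : ℝ × ℝ)) ((0 : ℝ), (1 : ℝ)) y :=
      (hasDerivAt_const y x).prodMk (hasDerivAt_id y)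
    exact (htd (x, y)).hasFDerivAt.comp_hasDerivAt y hy
  -- sign of the vertical partial derivative is globally constant
  have hsign : (∀ x y : ℝ, 0 < deriv (t x) y) ∨ (∀ x y : ℝ, deriv (t x) y < 0) := by
    have hs : Continuous (fun x : ℝ => t x 1 - t x 0) := by
      have h1 : Continuous (fun x : ℝ => f (x, 1)) :=
        htc.comp (continuous_id.prodMk continuous_const)
      have h0 : Continuous (fun x : ℝ => f (x, 0)) :=
        htc.comp (continuous_id.prodMk continuous_const)
      exact h1.sub h0
    have hne : ∀ x : ℝ, t x 1 - t x 0 ≠ 0 := by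
      intro x h
      have : t x 1 = t x 0 := by linarith
      exact one_ne_zero (hinj x this)
    -- s has constant sign by IVT
    have hcases : (∀ x : ℝ, 0 < t x 1 - t x 0) ∨ (∀ x : ℝ, t x 1 - t x 0 < 0) := by
      by_contra hcon
      push_neg at hcon
      obtain ⟨⟨a, ha⟩, ⟨b, hb⟩⟩ := hcon
      have ha' : t a 1 - t a 0 < 0 := lt_of_le_of_ne ha (hne a)
      have hb' : 0 < t b 1 - t b 0 := lt_of_le_of_ne (le_of_not_gt (by simpa using hb)) (Ne.symm (hne b))
      have hsub := intermediate_value_univ a b hs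
      have h0 : (0 : ℝ) ∈ Set.Icc (t a 1 - t a 0) (t b 1 - t b 0) := ⟨ha'.le, hb'.le⟩
      obtain ⟨x, hx⟩ := hsub h0
      exact hne x hx
    rcases hcases with hpos | hneg
    · left
      intro x y
      have hmono : StrictMono (t x) := by
        rcases hsm x with h | h
        · exact h
        · exfalso; have := h (show (0:ℝ) < 1 by norm_num); linarith [hpos x]
      have h0 : 0 ≤ deriv (t x) y :=
        mono_deriv_nonneg' hmono.monotone ((hsec x y).hasDerivAt)
      exact lt_of_le_of_ne h0 (Ne.symm (hty x y))
    · right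
      intro x y
      have hanti : StrictAnti (t x) := by
        rcases hsm x with h | h
        · exfalso; have := h (show (0:ℝ) < 1 by norm_num); linarith [hneg x]
        · exact h
      have h0 : deriv (t x) y ≤ 0 :=
        anti_deriv_nonpos' hanti.antitone ((hsec x y).hasDerivAt)
      exact lt_of_le_of_ne h0 (hty x y)
  -- the curve function g is differentiable with the key derivative formula
  have hgder : ∀ x : ℝ, HasDerivAt (fun x' => t x' (R x'))
      (deriv (t x) (R x) * (deriv R x - deriv (T (t x (R x))) x)) x := by
    intro x
    set t₀ := t x (R x) with ht₀
    have hfd : HasFDerivAt f (fderiv ℝ f (x, R x)) (x, R x) := (htd (x, R x)).hasFDerivAt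
    set L := fderiv ℝ f (x, R x) with hL
    have hcurv : HasDerivAt (fun x' => ((x', R x') : ℝ × ℝ)) ((1 : ℝ), deriv R x) x :=
      (hasDerivAt_id x).prodMk (hR x).hasDerivAt
    have hgd : HasDerivAt (fun x' => t x' (R x')) (L (1, deriv R x)) x :=
      by have h := hfd.comp_hasDerivAt x hcurv; exact h
    -- the contour through (x, R x)
    have hpt : T t₀ x = R x := hTinv x (R x)
    have hTcurv : HasDerivAt (fun x' => ((x', T t₀ x') : ℝ × ℝ)) ((1 : ℝ), deriv (T t₀) x) x :=
      (hasDerivAt_id x).prodMk ((hTd t₀) x).hasDerivAt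
    have hfd' : HasFDerivAt f L (x, T t₀ x) := by rw [hpt]; exact hfd
    have hψ : HasDerivAt (fun x' => t x' (T t₀ x')) (L (1, deriv (T t₀) x)) x :=
      by have h := hfd'.comp_hasDerivAt x hTcurv; exact h
    have hzero : L (1, deriv (T t₀) x) = 0 := by
      have hconst : (fun x' => t x' (T t₀ x')) = fun _ => t₀ :=
        funext fun x' => hTlevel t₀ x'
      rw [hconst] at hψ
      exact hψ.unique (hasDerivAt_const x t₀)
    have hsd : deriv (t x) (R x) = L (0, 1) := (hsecd x (R x)).deriv
    have hLsplit : L (1, deriv R x) =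
        L (1, deriv (T t₀) x) + (deriv R x - deriv (T t₀) x) * L (0, 1) := by
      have heq : ((1 : ℝ), deriv R x) =
          ((1 : ℝ), deriv (T t₀) x) + (deriv R x - deriv (T t₀) x) • ((0 : ℝ), (1 : ℝ)) := by
        simp [Prod.ext_iff]
      rw [heq, map_add, map_smul, smul_eq_mul]
    have : L (1, deriv R x) = deriv (t x) (R x) * (deriv R x - deriv (T t₀) x) := by
      rw [hLsplit, hzero, hsd]; ring
    rw [← this]
    exact hgd
  have hgdiff : Differentiable ℝ (fun x => t x (R x)) := fun x => (hgder x).differentiableAt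
  have hgderiv : ∀ x : ℝ, deriv (fun x' => t x' (R x')) x =
      deriv (t x) (R x) * (deriv R x - deriv (T (t x (R x))) x) := fun x => (hgder x).deriv
  -- conclude
  constructor
  · rintro (hm | hm)
    · rcases hsign with hc | hc
      · left; intro x
        have h0 : 0 ≤ deriv (t x) (R x) * (deriv R x - deriv (T (t x (R x))) x) :=
          mono_deriv_nonneg' hm (hgder x)
        nlinarith [hc x (R x)]
      · right; intro x
        have h0 : 0 ≤ deriv (t x) (R x) * (deriv R x - deriv (T (t x (R x))) x) :=
          mono_deriv_nonneg' hm (hgder x)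
        nlinarith [hc x (R x)]
    · rcases hsign with hc | hc
      · right; intro x
        have h0 : deriv (t x) (R x) * (deriv R x - deriv (T (t x (R x))) x) ≤ 0 :=
          anti_deriv_nonpos' hm (hgder x)
        nlinarith [hc x (R x)]
      · left; intro x
        have h0 : deriv (t x) (R x) * (deriv R x - deriv (T (t x (R x))) x) ≤ 0 :=
          anti_deriv_nonpos' hm (hgder x)
        nlinarith [hc x (R x)]
  · rintro (hD | hD)
    · rcases hsign with hc | hc
      · left
        refine monotone_of_deriv_nonneg hgdiff fun x => ?_
        rw [hgderiv x]
        exact mul_nonneg (hc x (R x)).le (hD x)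
      · right
        refine antitone_of_deriv_nonpos hgdiff fun x => ?_
        rw [hgderiv x]
        exact mul_nonpos_of_nonpos_of_nonneg (hc x (R x)).le (hD x)
    · rcases hsign with hc | hc
      · right
        refine antitone_of_deriv_nonpos hgdiff fun x => ?_
        rw [hgderiv x]
        exact mul_nonpos_of_nonneg_of_nonpos (hc x (R x)).le (hD x)
      · left
        refine monotone_of_deriv_nonneg hgdiff fun x => ?_
        rw [hgderiv x]
        exact mul_nonneg_iff.mpr (Or.inr ⟨(hc x (R x)).le, hD x⟩)
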